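/- Let {v^1, …, v^n} be an orthonormal basis of ℝ^n. For s ∈ {−1,0,1}^n let K^s := {Σ_{j=1}^n λ_j s_j v^j : λ_1, …, λ_n ≥ 0}. Let G^1, …, G^k ⊆ ℝ^n be closed convex sets with 0 ∈ G^i, let s^1, …, s^k ∈ {−1,1}^n, and set D^i := G^i ∩ K^{s^i}. Assume: (1) for each i, (D^i − K^{s^i}) ∩ K^{s^i} = D^i and D^i is compact; (2) for every t ∈ {−1,1}^n there exist pairwise disjoint sets J^t_1, …, J^t_k ⊆ {1,…,n} such that D^i + K^t = (D^i ∩ span{v^j : j ∈ J^t_i}) + K^t for every i (where span of the empty set is {0}). Let b^1, …, b^k ∈ ℝ^n and C^i := D^i + b^i. For i, l ∈ {1,…,k} and j ∈ {1,…,n} define v^{i,j} := s^i_j v^j, b̄^{i,l}_j := max{⟨v^{i,j}, x⟩ : x ∈ C^l} for l ≠ i, b̄^{i,i}_j := ⟨v^{i,j}, b^i⟩, L^i_j := min{⟨v^j, x⟩ : x ∈ C^i}, and U^i_j := max{⟨v^j, x⟩ : x ∈ C^i} (these extrema exist by compactness). Then Q(C^1,…,C^k) equals the set of all (x, y) ∈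 ℝ^n × ℝ^k such that: y ∈ Δ^k; for every j ∈ {1,…,n}, Σ_{i=1}^k L^i_j y_i ≤ ⟨v^j, x⟩ ≤ Σ_{i=1}^k U^i_j y_i; and for every i ∈ {1,…,k}, writing z^i := Σ_{j=1}^n max(0, ⟨v^{i,j}, x⟩ − Σ_{l=1}^k b̄^{i,l}_j y_l) · v^{i,j}, one has z^i ∈ y_i • G^i if y_i > 0 and z^i ∈ rec(G^i) if y_i = 0. -/

import Mathlib

open Pointwise Set

noncomputable section

/-- The recession cone of a set. -/
def recCone {E : Type*} [AddCommGroup E] [Module ℝ E] (S : Set E) : Set E :=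
  {d | ∀ x ∈ S, ∀ t : ℝ, 0 ≤ t → x + t • d ∈ S}

/-- The Cayley embedding `Q(C¹,…,Cᵏ) = conv(⋃ᵢ Cⁱ × {eⁱ})`. -/
def CayleyQ {n k : ℕ} (C : Fin k → Set (Fin n → ℝ)) :
    Set ((Fin n → ℝ) × (Fin k → ℝ)) :=
  convexHull ℝ (⋃ i, (C i) ×ˢ ({Pi.single i 1} : Set (Fin k → ℝ)))

def dotp {n : ℕ} (u x : Fin n → ℝ) : ℝ := ∑ j, u j * x j

/-- The cone `K^s = cone{sⱼ vʲ : j}` generated by the signed basis vectors. -/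
def Kcone {n : ℕ} (v : Fin n → Fin n → ℝ) (s : Fin n → ℝ) : Set (Fin n → ℝ) :=
  {z | ∃ lam : Fin n → ℝ, (∀ j, 0 ≤ lam j) ∧ z = ∑ j, lam j • s j • v j}

namespace Stmt12Aux

variable {n : ℕ}

def dotL (u : Fin n → ℝ) : (Fin n → ℝ) →ₗ[ℝ] ℝ where
  toFun x := dotp u x
  map_add' x y := by simp [dotp, mul_add, Finset.sum_add_distrib]
  map_smul' c x := by simp [dotp, Finset.mul_sum, mul_left_comm]

@[simp] lemma dotL_apply (u x : Fin n → ℝ) : dotL u x = dotp u x := rfl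

lemma dotp_add (u x y : Fin n → ℝ) : dotp u (x + y) = dotp u x + dotp u y :=
  (dotL u).map_add x y

lemma dotp_smul (u : Fin n → ℝ) (c : ℝ) (x : Fin n → ℝ) : dotp u (c • x) = c * dotp u x :=
  (dotL u).map_smul c x

@[simp] lemma dotp_zero (u : Fin n → ℝ) : dotp u 0 = 0 := (dotL u).map_zero

lemma dotp_sub (u x y : Fin n → ℝ) : dotp u (x - y) = dotp u x - dotp u y :=
  (dotL u).map_sub x y

lemma dotp_sum (u : Fin n → ℝ) {ι : Type*} (t : Finset ι) (f : ι → Fin n → ℝ) :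
    dotp u (∑ j ∈ t, f j) = ∑ j ∈ t, dotp u (f j) :=
  map_sum (dotL u) f t

lemma dotp_smul_left (c : ℝ) (u x : Fin n → ℝ) : dotp (c • u) x = c * dotp u x := by
  simp [dotp, Finset.mul_sum, mul_assoc]

lemma expand (v : Fin n → Fin n → ℝ)
    (hvon : ∀ j j', dotp (v j) (v j') = if j = j' then 1 else 0)
    (hvspan : Submodule.span ℝ (Set.range v) = ⊤)
    (x : Fin n → ℝ) : ∑ j, dotp (v j) x • v j = x := by
  have hx : x ∈ Submodule.span ℝ (Set.range v) := hvspan ▸ Submodule.mem_top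
  induction hx using Submodule.span_induction with
  | mem z hz =>
      obtain ⟨j0, rfl⟩ := hz
      have h : ∀ j, dotp (v j) (v j0) • v j = (if j = j0 then v j0 else 0) := by
        intro j
        rw [hvon]
        by_cases h : j = j0 <;> simp [h]
      simp only [h]
      simp
  | zero => simp
  | add z w _ _ hz hw =>
      have : ∀ j, dotp (v j) (z + w) • v j = dotp (v j) z • v j + dotp (v j) w • v j := by
        intro j; rw [dotp_add, add_smul]
      simp only [this, Finset.sum_add_distrib, hz, hw]
  | smul c z _ hz =>
      have : ∀ j, dotp (v j) (c • z) • v j = c • (dotp (v j) z • v j) := by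
        intro j; rw [dotp_smul, mul_smul]
      simp only [this, ← Finset.smul_sum, hz]

lemma dotp_combo (v : Fin n → Fin n → ℝ)
    (hvon : ∀ j j', dotp (v j) (v j') = if j = j' then 1 else 0)
    (lam t : Fin n → ℝ) (j : Fin n) :
    dotp (v j) (∑ j', lam j' • t j' • v j') = lam j * t j := by
  rw [dotp_sum, Finset.sum_eq_single j]
  · rw [dotp_smul, dotp_smul, hvon]; simp
  · intro j' _ hj'
    rw [dotp_smul, dotp_smul, hvon]
    simp [Ne.symm hj']
  · simp

lemma kcone_mem (v : Fin n → Fin n → ℝ)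
    (hvon : ∀ j j', dotp (v j) (v j') = if j = j' then 1 else 0)
    (hvspan : Submodule.span ℝ (Set.range v) = ⊤)
    (t : Fin n → ℝ) (ht : ∀ j, t j = -1 ∨ t j = 1) (x : Fin n → ℝ) :
    x ∈ Kcone v t ↔ ∀ j, 0 ≤ t j * dotp (v j) x := by
  have ht2 : ∀ j, t j * t j = 1 := by
    intro j; rcases ht j with h | h <;> rw [h] <;> norm_num
  constructor
  · rintro ⟨lam, hlam, rfl⟩ j
    rw [dotp_combo v hvon]
    calc (0:ℝ) ≤ lam j * (t j * t j) := by rw [ht2]; simpa using hlam j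
    _ = t j * (lam j * t j) := by ring
  · intro h
    refine ⟨fun j => t j * dotp (v j) x, h, ?_⟩
    have heq : ∀ j, (t j * dotp (v j) x) • t j • v j = dotp (v j) x • v j := by
      intro j
      rw [smul_smul]
      congr 1
      calc t j * dotp (v j) x * t j = (t j * t j) * dotp (v j) x := by ring
      _ = dotp (v j) x := by rw [ht2]; ring
    simp only [heq]
    exact (expand v hvon hvspan x).symm

lemma kcone_zero (v : Fin n → Fin n → ℝ) (t : Fin n → ℝ) : (0 : Fin n → ℝ) ∈ Kcone v t :=
  ⟨0, fun _ => le_refl 0, by simp⟩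

end Stmt12Aux

open Stmt12Aux

/-- Theorem 5 (generalization of Theorem 3): description of the Cayley embedding for sets
`Cⁱ = (Gⁱ ∩ K^{sⁱ}) + bⁱ` satisfying the generalized monotonicity conditions. -/
theorem stmt12 {n k : ℕ}
    (v : Fin n → Fin n → ℝ)
    (hvon : ∀ j j', dotp (v j) (v j') = if j = j' then 1 else 0)
    (hvspan : Submodule.span ℝ (Set.range v) = ⊤)
    (G : Fin k → Set (Fin n → ℝ)) (hGc : ∀ i, IsClosed (G i))
    (hGconv : ∀ i, Convex ℝ (G i)) (hG0 : ∀ i, (0 : Fin n → ℝ) ∈ G i)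
    (s : Fin k → Fin n → ℝ) (hs : ∀ i j, s i j = -1 ∨ s i j = 1)
    (D : Fin k → Set (Fin n → ℝ)) (hDdef : ∀ i, D i = G i ∩ Kcone v (s i))
    (h1 : ∀ i, (D i - Kcone v (s i)) ∩ Kcone v (s i) = D i ∧ IsCompact (D i))
    (h2 : ∀ t : Fin n → ℝ, (∀ j, t j = -1 ∨ t j = 1) →
      ∃ J : Fin k → Set (Fin n), (∀ i i', i ≠ i' → Disjoint (J i) (J i')) ∧
        ∀ i, D i + Kcone v t =
          (D i ∩ (Submodule.span ℝ (v '' J i) : Set (Fin n → ℝ))) + Kcone v t)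
    (b : Fin k → Fin n → ℝ)
    (C : Fin k → Set (Fin n → ℝ)) (hCdef : ∀ i, C i = D i + {b i})
    (bbar : Fin k → Fin k → Fin n → ℝ)
    (hbbar : ∀ i l j,
      (i ≠ l → IsGreatest ((fun x => dotp (s i j • v j) x) '' C l) (bbar i l j)) ∧
      (i = l → bbar i l j = dotp (s i j • v j) (b i)))
    (Lb Ub : Fin k → Fin n → ℝ)
    (hLb : ∀ i j, IsLeast ((fun x => dotp (v j) x) '' C i) (Lb i j))
    (hUb : ∀ i j, IsGreatest ((fun x => dotp (v j) x) '' C i) (Ub i j)) :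
    CayleyQ C = {p : (Fin n → ℝ) × (Fin k → ℝ) |
      (∀ i, 0 ≤ p.2 i) ∧ (∑ i, p.2 i = 1) ∧
      (∀ j, ∑ i, Lb i j * p.2 i ≤ dotp (v j) p.1 ∧
            dotp (v j) p.1 ≤ ∑ i, Ub i j * p.2 i) ∧
      ∀ i,
        (0 < p.2 i →
          (∑ j, max 0 (dotp (s i j • v j) p.1 - ∑ l, bbar i l j * p.2 l) • (s i j • v j))
            ∈ p.2 i • G i) ∧
        (p.2 i = 0 →
          (∑ j, max 0 (dotp (s i j • v j) p.1 - ∑ l, bbar i l j * p.2 l) • (s i j • v j))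
            ∈ recCone (G i))} := by
  classical
  -- basic coordinate facts
  have hs2 : ∀ i j, s i j * s i j = 1 := by
    intro i j; rcases hs i j with h | h <;> rw [h] <;> norm_num
  have ksmem : ∀ i x, x ∈ Kcone v (s i) ↔ ∀ j, 0 ≤ s i j * dotp (v j) x :=
    fun i x => kcone_mem v hvon hvspan (s i) (hs i) x
  have hD0 : ∀ i, (0 : Fin n → ℝ) ∈ D i := by
    intro i; rw [hDdef i]; exact ⟨hG0 i, kcone_zero v (s i)⟩
  have hCmem : ∀ i x, x ∈ C i ↔ ∃ d ∈ D i, x = d + b i := by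
    intro i x
    rw [hCdef i]
    constructor
    · rintro ⟨d, hd, c, hc, rfl⟩
      rcases hc with rfl
      exact ⟨d, hd, rfl⟩
    · rintro ⟨d, hd, rfl⟩
      exact ⟨d, hd, b i, rfl, rfl⟩
  have hbmem : ∀ i, b i ∈ C i := fun i => (hCmem i _).2 ⟨0, hD0 i, (zero_add _).symm⟩
  have hDK : ∀ i, ∀ d ∈ D i, ∀ j, 0 ≤ s i j * dotp (v j) d := by
    intro i d hd j
    have : d ∈ Kcone v (s i) := by
      rw [hDdef i] at hd; exact hd.2
    exact (ksmem i d).1 this j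
  have hDsub : ∀ i, D i ⊆ G i := by
    intro i; rw [hDdef i]; exact Set.inter_subset_left
  have hdown : ∀ i, ∀ d ∈ D i, ∀ e : Fin n → ℝ,
      (∀ j, 0 ≤ s i j * dotp (v j) e) → (∀ j, s i j * dotp (v j) e ≤ s i j * dotp (v j) d) →
      e ∈ D i := by
    intro i d hd e he1 he2
    have heK : e ∈ Kcone v (s i) := (ksmem i e).2 he1
    have hdeK : d - e ∈ Kcone v (s i) := by
      rw [ksmem]
      intro j
      rw [dotp_sub]
      have := he2 j
      nlinarith [he2 j]
    have : e ∈ (D i - Kcone v (s i)) ∩ Kcone v (s i) := by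
      refine ⟨⟨d, hd, d - e, hdeK, sub_sub_cancel d e⟩, heK⟩
    rw [(h1 i).1] at this
    exact this
  -- continuity of coordinates
  have hdcont : ∀ j, Continuous (fun x : Fin n → ℝ => dotp (v j) x) := by
    intro j
    unfold dotp
    exact continuous_finset_sum _ fun j' _ => continuous_const.mul (continuous_apply j')
  -- widths ρ i j := max of s i j * ⟨v j, ·⟩ over D i
  have hρex : ∀ i j, ∃ r, IsGreatest ((fun d => s i j * dotp (v j) d) '' D i) r := by
    intro i j
    have hco : IsCompact ((fun d => s i j * dotp (v j) d) '' D i) :=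
      (h1 i).2.image (continuous_const.mul (hdcont j))
    exact hco.exists_isGreatest ⟨_, ⟨0, hD0 i, rfl⟩⟩
  choose ρ hρ using hρex
  have hρmem : ∀ i j, ∃ d ∈ D i, s i j * dotp (v j) d = ρ i j := by
    intro i j
    obtain ⟨d, hd, hde⟩ := (hρ i j).1
    exact ⟨d, hd, hde⟩
  have hρub : ∀ i j, ∀ d ∈ D i, s i j * dotp (v j) d ≤ ρ i j := by
    intro i j d hd
    exact (hρ i j).2 ⟨d, hd, rfl⟩
  have hρ0 : ∀ i j, 0 ≤ ρ i j := by
    intro i j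
    have h := (hρ i j).2 ⟨0, hD0 i, rfl⟩
    simpa using h
  have hUbρ : ∀ i j, Ub i j = dotp (v j) (b i) + (if s i j = 1 then ρ i j else 0) := by
    intro i j
    rcases hs i j with h | h
    · rw [if_neg (by rw [h]; norm_num), add_zero]
      refine (hUb i j).unique ⟨⟨b i, hbmem i, rfl⟩, ?_⟩
      rintro r ⟨x, hx, rfl⟩
      obtain ⟨d, hd, rfl⟩ := (hCmem i x).1 hx
      have h2 := hDK i d hd j
      rw [h] at h2
      simp only [dotp_add]
      linarith
    · rw [if_pos h]
      obtain ⟨dM, hdM, hdMe⟩ := hρmem i j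
      rw [h, one_mul] at hdMe
      refine (hUb i j).unique ⟨⟨dM + b i, (hCmem i _).2 ⟨dM, hdM, rfl⟩, ?_⟩, ?_⟩
      · simp only [dotp_add]
        linarith
      · rintro r ⟨x, hx, rfl⟩
        obtain ⟨d, hd, rfl⟩ := (hCmem i x).1 hx
        have h2 := hρub i j d hd
        rw [h, one_mul] at h2
        simp only [dotp_add]
        linarith
  have hLbρ : ∀ i j, Lb i j = dotp (v j) (b i) - (if s i j = -1 then ρ i j else 0) := by
    intro i j
    rcases hs i j with h | h
    · rw [if_pos h]
      obtain ⟨dM, hdM, hdMe⟩ := hρmem i j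
      rw [h] at hdMe
      refine (hLb i j).unique ⟨⟨dM + b i, (hCmem i _).2 ⟨dM, hdM, rfl⟩, ?_⟩, ?_⟩
      · simp only [dotp_add]
        linarith
      · rintro r ⟨x, hx, rfl⟩
        obtain ⟨d, hd, rfl⟩ := (hCmem i x).1 hx
        have h2 := hρub i j d hd
        rw [h] at h2
        simp only [dotp_add]
        linarith
    · rw [if_neg (by rw [h]; norm_num), sub_zero]
      refine (hLb i j).unique ⟨⟨b i, hbmem i, rfl⟩, ?_⟩
      rintro r ⟨x, hx, rfl⟩
      obtain ⟨d, hd, rfl⟩ := (hCmem i x).1 hx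
      have h2 := hDK i d hd j
      rw [h, one_mul] at h2
      simp only [dotp_add]
      linarith
  have hbb : ∀ i j, bbar i i j = s i j * dotp (v j) (b i) := by
    intro i j; rw [(hbbar i i j).2 rfl, dotp_smul_left]
  have hbbar' : ∀ i l j, l ≠ i →
      bbar i l j = s i j * dotp (v j) (b l) + (if s l j = s i j then ρ l j else 0) := by
    intro i l j hli
    have hg := (hbbar i l j).1 (Ne.symm hli)
    have hfun : (fun x => dotp (s i j • v j) x) = fun x => s i j * dotp (v j) x := by
      funext x; rw [dotp_smul_left]
    rw [hfun] at hg
    refine hg.unique ?_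
    by_cases hsl : s l j = s i j
    · rw [if_pos hsl]
      obtain ⟨dM, hdM, hdMe⟩ := hρmem l j
      rw [hsl] at hdMe
      constructor
      · refine ⟨dM + b l, (hCmem l _).2 ⟨dM, hdM, rfl⟩, ?_⟩
        simp only [dotp_add, mul_add]
        linarith
      · rintro r ⟨x, hx, rfl⟩
        obtain ⟨d, hd, rfl⟩ := (hCmem l x).1 hx
        have h2 := hρub l j d hd
        rw [hsl] at h2
        simp only [dotp_add, mul_add]
        linarith
    · rw [if_neg hsl, add_zero]
      have hop : s i j = - s l j := by
        rcases hs i j with h1 | h1 <;> rcases hs l j with h2 | h2 <;>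
          rw [h1, h2] at hsl ⊢ <;> norm_num at hsl <;> norm_num
      constructor
      · exact ⟨b l, hbmem l, rfl⟩
      · rintro r ⟨x, hx, rfl⟩
        obtain ⟨d, hd, rfl⟩ := (hCmem l x).1 hx
        have h2 := hDK l d hd j
        simp only [dotp_add, mul_add, hop]
        nlinarith [h2]
  -- convexity facts
  have hKconv : ∀ (t : Fin n → ℝ), (∀ j, t j = -1 ∨ t j = 1) → Convex ℝ (Kcone v t) := by
    intro t ht x hx y hy α β hα hβ hαβ
    rw [kcone_mem v hvon hvspan t ht] at hx hy ⊢
    intro j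
    rw [dotp_add, dotp_smul, dotp_smul, mul_add]
    nlinarith [mul_nonneg hα (hx j), mul_nonneg hβ (hy j)]
  have hDconv : ∀ i, Convex ℝ (D i) := by
    intro i; rw [hDdef i]; exact (hGconv i).inter (hKconv (s i) (hs i))
  have hCconv : ∀ i, Convex ℝ (C i) := by
    intro i; rw [hCdef i]; exact (hDconv i).add (convex_singleton _)
  -- the intermediate set T of convex combinations
  set T : Set ((Fin n → ℝ) × (Fin k → ℝ)) :=
    {p | (∀ i, 0 ≤ p.2 i) ∧ (∑ i, p.2 i = 1) ∧
      ∃ w : Fin k → (Fin n → ℝ), (∀ i, w i ∈ C i) ∧ p.1 = ∑ i, p.2 i • w i} with hTdef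
  have hTmem : ∀ x y, (x, y) ∈ T ↔ ((∀ i, 0 ≤ y i) ∧ (∑ i, y i = 1) ∧
      ∃ w : Fin k → (Fin n → ℝ), (∀ i, w i ∈ C i) ∧ x = ∑ i, y i • w i) := by
    intro x y; rw [hTdef]; rfl
  have hQT : CayleyQ C = T := by
    apply Set.Subset.antisymm
    · apply convexHull_min
      · rintro ⟨x, y⟩ hp
        rw [Set.mem_iUnion] at hp
        obtain ⟨i, hx, hy⟩ := hp
        rw [Set.mem_singleton_iff] at hy
        subst hy
        rw [hTmem]
        refine ⟨?_, ?_, fun l => if l = i then x else b l, ?_, ?_⟩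
        · intro l
          rcases eq_or_ne l i with h | h <;> simp [Pi.single_apply, h]
        · simp [Pi.single_apply]
        · intro l
          rcases eq_or_ne l i with h | h <;> simp [h, hx, hbmem l]
        · rw [Finset.sum_eq_single i]
          · simp [Pi.single_apply]
          · intro l _ hl
            simp [Pi.single_apply, hl]
          · simp
      · rintro ⟨x1, y1⟩ hp ⟨x2, y2⟩ hq α β hα hβ hαβ
        rw [hTmem] at hp hq
        obtain ⟨hy1n, hy1s, w1, hw1, hx1⟩ := hp
        obtain ⟨hy2n, hy2s, w2, hw2, hx2⟩ := hq
        have hpt : α • ((x1, y1) : (Fin n → ℝ) × (Fin k → ℝ)) + β • (x2, y2)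
            = (α • x1 + β • x2, α • y1 + β • y2) := rfl
        rw [hpt, hTmem]
        have hcn : ∀ l, 0 ≤ α * y1 l + β * y2 l := fun l =>
          add_nonneg (mul_nonneg hα (hy1n l)) (mul_nonneg hβ (hy2n l))
        refine ⟨?_, ?_, ?_⟩
        · intro l
          simpa using hcn l
        · simp only [Pi.add_apply, Pi.smul_apply, smul_eq_mul]
          rw [Finset.sum_add_distrib, ← Finset.mul_sum, ← Finset.mul_sum, hy1s, hy2s]
          simpa using hαβ
        · refine ⟨fun l => if h : α * y1 l + β * y2 l = 0 then b l
            else (α * y1 l / (α * y1 l + β * y2 l)) • w1 l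
              + (β * y2 l / (α * y1 l + β * y2 l)) • w2 l, ?_, ?_⟩
          · intro l
            by_cases h : α * y1 l + β * y2 l = 0
            · simp only [dif_pos h]
              exact hbmem l
            · simp only [dif_neg h]
              refine hCconv l (hw1 l) (hw2 l)
                (div_nonneg (mul_nonneg hα (hy1n l)) (hcn l))
                (div_nonneg (mul_nonneg hβ (hy2n l)) (hcn l)) ?_
              rw [← add_div, div_self h]
          · have hterm : ∀ l, (α * y1 l + β * y2 l) •
                (if h : α * y1 l + β * y2 l = 0 then b l
                  else (α * y1 l / (α * y1 l + β * y2 l)) • w1 l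
                    + (β * y2 l / (α * y1 l + β * y2 l)) • w2 l)
                = (α * y1 l) • w1 l + (β * y2 l) • w2 l := by
              intro l
              by_cases h : α * y1 l + β * y2 l = 0
              · have h1 : α * y1 l = 0 := by
                  have := mul_nonneg hα (hy1n l); have := mul_nonneg hβ (hy2n l); linarith
                have h2 : β * y2 l = 0 := by
                  have := mul_nonneg hα (hy1n l); have := mul_nonneg hβ (hy2n l); linarith
                rw [dif_pos h, h, h1, h2, zero_smul, zero_smul, zero_smul, add_zero]
              · rw [dif_neg h, smul_add, smul_smul, smul_smul]
                have e1 : (α * y1 l + β * y2 l) * (α * y1 l / (α * y1 l + β * y2 l))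
                    = α * y1 l := by field_simp
                have e2 : (α * y1 l + β * y2 l) * (β * y2 l / (α * y1 l + β * y2 l))
                    = β * y2 l := by field_simp
                rw [e1, e2]
            simp only [Pi.add_apply, Pi.smul_apply, smul_eq_mul]
            rw [hx1, hx2]
            rw [Finset.smul_sum, Finset.smul_sum, ← Finset.sum_add_distrib]
            rw [Finset.sum_congr rfl (fun l _ => hterm l)]
            congr 1
            funext l
            rw [smul_smul, smul_smul]
    · rintro ⟨x, y⟩ hp
      rw [hTmem] at hp
      obtain ⟨hyn, hys, w, hw, hx⟩ := hp
      have hrep : ((x, y) : (Fin n → ℝ) × (Fin k → ℝ))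
          = ∑ i, y i • ((w i, Pi.single i 1) : (Fin n → ℝ) × (Fin k → ℝ)) := by
        rw [Prod.ext_iff]
        constructor
        · rw [Prod.fst_sum]
          simpa using hx
        · rw [Prod.snd_sum]
          funext l
          rw [Finset.sum_apply]
          simp [Pi.single_apply, Finset.sum_ite_eq]
      rw [CayleyQ, hrep]
      refine Convex.sum_mem (convex_convexHull ℝ _) (fun i _ => hyn i) hys (fun i _ => ?_)
      exact subset_convexHull ℝ _ (Set.mem_iUnion.2 ⟨i, Set.mk_mem_prod (hw i) rfl⟩)
  rw [hQT]
  apply Set.Subset.antisymm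
  · -- T is contained in the constraint set
    rintro ⟨x, y⟩ hp
    rw [hTmem] at hp
    obtain ⟨hyn, hys, w, hw, hx⟩ := hp
    choose d hdD hwdef using fun i => (hCmem i (w i)).1 (hw i)
    have hxc : ∀ j, dotp (v j) x = ∑ i, y i * dotp (v j) (w i) := by
      intro j
      rw [hx, dotp_sum]
      exact Finset.sum_congr rfl fun i _ => dotp_smul _ _ _
    simp only [Set.mem_setOf_eq]
    refine ⟨hyn, hys, ?_, ?_⟩
    · intro j
      constructor
      · rw [hxc j]
        refine Finset.sum_le_sum fun i _ => ?_
        have hL := (hLb i j).2 ⟨w i, hw i, rfl⟩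
        nlinarith [hyn i]
      · rw [hxc j]
        refine Finset.sum_le_sum fun i _ => ?_
        have hU := (hUb i j).2 ⟨w i, hw i, rfl⟩
        nlinarith [hyn i]
    · intro i
      have harg : ∀ j, dotp (s i j • v j) x - ∑ l, bbar i l j * y l
          ≤ y i * (s i j * dotp (v j) (d i)) := by
        intro j
        rw [dotp_smul_left, hxc j, Finset.mul_sum, ← Finset.sum_sub_distrib]
        have hterm : ∀ l, s i j * (y l * dotp (v j) (w l)) - bbar i l j * y l
            ≤ if l = i then y i * (s i j * dotp (v j) (d i)) else 0 := by
          intro l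
          by_cases h : l = i
          · subst h
            rw [if_pos rfl, hbb l j, hwdef l, dotp_add]
            apply le_of_eq
            ring
          · rw [if_neg h]
            have hub := ((hbbar i l j).1 (fun he => h (he ▸ rfl))).2 ⟨w l, hw l, rfl⟩
            simp only [dotp_smul_left] at hub
            nlinarith [hyn l]
        calc ∑ l, (s i j * (y l * dotp (v j) (w l)) - bbar i l j * y l)
            ≤ ∑ l, (if l = i then y i * (s i j * dotp (v j) (d i)) else 0) :=
              Finset.sum_le_sum fun l _ => hterm l
          _ = y i * (s i j * dotp (v j) (d i)) := by simp
      have hargpos : ∀ j, 0 ≤ s i j * dotp (v j) (d i) := fun j => hDK i (d i) (hdD i) j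
      constructor
      · intro hyi
        set a : Fin n → ℝ :=
          fun j => max 0 (dotp (s i j • v j) x - ∑ l, bbar i l j * y l) with hadef
        have ha0 : ∀ j, 0 ≤ a j := fun j => le_max_left _ _
        have hale : ∀ j, a j ≤ y i * (s i j * dotp (v j) (d i)) :=
          fun j => max_le (mul_nonneg hyi.le (hargpos j)) (harg j)
        set g := (y i)⁻¹ • (∑ j, a j • (s i j • v j)) with hgdef
        have hgZ : ∑ j, a j • (s i j • v j) = y i • g := by
          rw [hgdef, smul_inv_smul₀ (ne_of_gt hyi)]
        have hgc : ∀ j, dotp (v j) g = (y i)⁻¹ * (a j * s i j) := by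
          intro j
          rw [hgdef, dotp_smul, dotp_combo v hvon]
        have hgs : ∀ j, s i j * dotp (v j) g = (y i)⁻¹ * a j := by
          intro j
          rw [hgc j]
          linear_combination ((y i)⁻¹ * a j) * (hs2 i j)
        have hgD : g ∈ D i := by
          refine hdown i (d i) (hdD i) g (fun j => ?_) (fun j => ?_)
          · rw [hgs j]
            exact mul_nonneg (inv_nonneg.2 hyi.le) (ha0 j)
          · rw [hgs j]
            calc (y i)⁻¹ * a j ≤ (y i)⁻¹ * (y i * (s i j * dotp (v j) (d i))) :=
                  mul_le_mul_of_nonneg_left (hale j) (inv_nonneg.2 hyi.le)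
              _ = s i j * dotp (v j) (d i) := by field_simp
        exact Set.mem_smul_set.2 ⟨g, hDsub i hgD, hgZ.symm⟩
      · intro hyi0
        have hz : ∀ j, max 0 (dotp (s i j • v j) x - ∑ l, bbar i l j * y l) = 0 := by
          intro j
          have h1 := harg j
          rw [hyi0, zero_mul] at h1
          exact max_eq_left h1
        simp only [hz, zero_smul, Finset.sum_const_zero]
        intro q hq t ht
        simpa using hq
  · -- the constraint set is contained in T
    rintro ⟨x, y⟩ hp
    simp only [Set.mem_setOf_eq] at hp
    obtain ⟨hyn, hys, hbnd, hz⟩ := hp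
    rw [hTmem]
    refine ⟨hyn, hys, ?_⟩
    -- residual coordinates
    obtain ⟨u, hudef⟩ : ∃ u : Fin n → ℝ,
        ∀ j, u j = dotp (v j) x - ∑ l, y l * dotp (v j) (b l) := ⟨_, fun j => rfl⟩
    obtain ⟨a, hadef⟩ : ∃ a : Fin k → Fin n → ℝ,
        ∀ i j, a i j = max 0 (dotp (s i j • v j) x - ∑ l, bbar i l j * y l) :=
      ⟨_, fun i j => rfl⟩
    have ha0 : ∀ i j, 0 ≤ a i j := fun i j => (hadef i j) ▸ le_max_left _ _
    have hamax : ∀ i j, a i j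
        = max 0 (s i j * u j - ∑ l, (if l ≠ i ∧ s l j = s i j then ρ l j * y l else 0)) := by
      intro i j
      rw [hadef i j]
      congr 1
      rw [dotp_smul_left, hudef j]
      have hsum : ∑ l, bbar i l j * y l
          = ∑ l, (s i j * (y l * dotp (v j) (b l))
              + (if l ≠ i ∧ s l j = s i j then ρ l j * y l else 0)) := by
        refine Finset.sum_congr rfl fun l _ => ?_
        by_cases h : l = i
        · subst h
          rw [hbb l j]
          simp only [ne_eq, not_true_eq_false, false_and, if_false]
          ring
        · rw [hbbar' i l j h]
          by_cases h2 : s l j = s i j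
          · rw [if_pos h2, if_pos ⟨h, h2⟩]; ring
          · rw [if_neg h2, if_neg (fun hc => h2 hc.2)]; ring
      rw [hsum, Finset.sum_add_distrib, ← Finset.mul_sum]
      ring
    have hstar : ∀ j (σ : ℝ), σ = -1 ∨ σ = 1 →
        σ * u j ≤ ∑ l, (if s l j = σ then ρ l j * y l else 0) := by
      intro j σ hσ
      rcases hσ with h | h
      · subst h
        have hb := (hbnd j).1
        have hrw : ∑ l, Lb l j * y l
            = ∑ l, (y l * dotp (v j) (b l) - (if s l j = -1 then ρ l j * y l else 0)) := by
          refine Finset.sum_congr rfl fun l _ => ?_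
          rw [hLbρ l j]
          by_cases h2 : s l j = -1
          · rw [if_pos h2, if_pos h2]; ring
          · rw [if_neg h2, if_neg h2]; ring
        rw [hrw, Finset.sum_sub_distrib] at hb
        rw [hudef j]
        linarith
      · subst h
        have hb := (hbnd j).2
        have hrw : ∑ l, Ub l j * y l
            = ∑ l, (y l * dotp (v j) (b l) + (if s l j = 1 then ρ l j * y l else 0)) := by
          refine Finset.sum_congr rfl fun l _ => ?_
          rw [hUbρ l j]
          by_cases h2 : s l j = 1
          · rw [if_pos h2, if_pos h2]; ring
          · rw [if_neg h2, if_neg h2]; ring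
        rw [hrw, Finset.sum_add_distrib] at hb
        rw [hudef j]
        linarith
    have hneed : ∀ j (σ : ℝ), σ = -1 ∨ σ = 1 → 0 < σ * u j →
        ∃ l, 0 < y l ∧ s l j = σ ∧ 0 < ρ l j := by
      intro j σ hσ hpos
      have hsum := hstar j σ hσ
      by_contra hcon
      push_neg at hcon
      have hle : ∀ l ∈ Finset.univ, (if s l j = σ then ρ l j * y l else 0) ≤ 0 := by
        intro l _
        by_cases h : s l j = σ
        · rw [if_pos h]
          rcases eq_or_lt_of_le (hyn l) with h0 | h0
          · rw [← h0, mul_zero]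
          · have hρle := hcon l h0 h
            nlinarith [hyn l]
        · rw [if_neg h]
      have hnp := Finset.sum_nonpos hle
      linarith
    have hstepB : ∀ t : Fin n → ℝ, (∀ j, t j = -1 ∨ t j = 1) →
        ∃ dd : Fin k → Fin n → ℝ, (∀ i, dd i ∈ D i) ∧
          ∀ j, 0 ≤ t j * dotp (v j) (x - ∑ i, y i • (dd i + b i)) := by
      intro t ht
      obtain ⟨J, hJdisj, hJeq⟩ := h2 t ht
      have ht2 : ∀ j, t j * t j = 1 := by
        intro j; rcases ht j with h | h <;> rw [h] <;> norm_num
      have hJmem : ∀ l j, s l j = - t j → 0 < ρ l j → j ∈ J l := by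
        intro l j hslt hρpos
        obtain ⟨dM, hdM, hdMe⟩ := hρmem l j
        have hdMem : dM ∈ (D l ∩ (Submodule.span ℝ (v '' J l) : Set (Fin n → ℝ))) + Kcone v t := by
          rw [← hJeq l]
          exact ⟨dM, hdM, 0, kcone_zero v t, add_zero dM⟩
        obtain ⟨e, ⟨heD, hespan⟩, κ, hκ, heκ⟩ := hdMem
        by_contra hjJ
        have hφe : dotp (v j) e = 0 := by
          have hsub : Submodule.span ℝ (v '' J l) ≤ LinearMap.ker (dotL (v j)) := by
            rw [Submodule.span_le]
            rintro _ ⟨j', hj', rfl⟩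
            rw [SetLike.mem_coe, LinearMap.mem_ker]
            show dotp (v j) (v j') = 0
            rw [hvon, if_neg]
            rintro rfl
            exact hjJ hj'
          have hh := hsub hespan
          rw [LinearMap.mem_ker] at hh
          exact hh
        have hκc := (kcone_mem v hvon hvspan t ht κ).1 hκ j
        have hsplit : dotp (v j) dM = dotp (v j) e + dotp (v j) κ := by
          rw [← heκ, dotp_add]
        rw [hφe, zero_add] at hsplit
        rw [hslt, hsplit] at hdMe
        linarith [hκc, hρpos]
      have hgmem : ∀ i, 0 < y i →
          ((y i)⁻¹ • (∑ j', a i j' • (s i j' • v j'))) ∈ D i ∧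
          (∀ j, s i j * dotp (v j) ((y i)⁻¹ • (∑ j', a i j' • (s i j' • v j')))
            = (y i)⁻¹ * a i j) := by
        intro i hyi
        have hcoord : ∀ j, s i j * dotp (v j) ((y i)⁻¹ • (∑ j', a i j' • (s i j' • v j')))
            = (y i)⁻¹ * a i j := by
          intro j
          rw [dotp_smul, dotp_combo v hvon]
          linear_combination ((y i)⁻¹ * a i j) * hs2 i j
        refine ⟨?_, hcoord⟩
        have hzi := (hz i).1 hyi
        obtain ⟨g, hgG, hgZ⟩ := Set.mem_smul_set.1 hzi
        have hfold : (∑ j, max 0 (dotp (s i j • v j) x - ∑ l, bbar i l j * y l) • (s i j • v j))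
            = ∑ j', a i j' • (s i j' • v j') := by
          refine Finset.sum_congr rfl fun j _ => ?_
          rw [hadef i j]
        rw [hfold] at hgZ
        have hginv : (y i)⁻¹ • (∑ j', a i j' • (s i j' • v j')) = g := by
          rw [← hgZ, inv_smul_smul₀ (ne_of_gt hyi)]
        rw [hginv, hDdef i]
        refine ⟨hgG, (ksmem i g).2 fun j => ?_⟩
        rw [← hginv, hcoord j]
        exact mul_nonneg (inv_nonneg.2 hyi.le) (ha0 i j)
      obtain ⟨dd, hdddef⟩ : ∃ dd : Fin k → Fin n → ℝ,
          ∀ i, dd i = if 0 < y i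
            then ∑ j', (if j' ∈ J i then (y i)⁻¹ * a i j' else 0) • (s i j' • v j')
            else 0 := ⟨_, fun i => rfl⟩
      have hddcoord : ∀ i j, dotp (v j) (dd i)
          = (if 0 < y i ∧ j ∈ J i then (y i)⁻¹ * a i j else 0) * s i j := by
        intro i j
        rw [hdddef i]
        by_cases h : 0 < y i
        · rw [if_pos h, dotp_combo v hvon]
          by_cases h2 : j ∈ J i
          · rw [if_pos h2, if_pos ⟨h, h2⟩]
          · rw [if_neg h2, if_neg (fun hc => h2 hc.2)]
        · rw [if_neg h, dotp_zero, if_neg (fun hc => h hc.1)]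
          ring
      have hddD : ∀ i, dd i ∈ D i := by
        intro i
        rw [hdddef i]
        by_cases h : 0 < y i
        · rw [if_pos h]
          obtain ⟨hgD, hgc⟩ := hgmem i h
          refine hdown i _ hgD _ (fun j => ?_) (fun j => ?_)
          · rw [dotp_combo v hvon]
            have he : s i j * ((if j ∈ J i then (y i)⁻¹ * a i j else 0) * s i j)
                = (if j ∈ J i then (y i)⁻¹ * a i j else 0) := by
              linear_combination (if j ∈ J i then (y i)⁻¹ * a i j else 0) * hs2 i j
            rw [he]
            by_cases h2 : j ∈ J i
            · rw [if_pos h2]; exact mul_nonneg (inv_nonneg.2 h.le) (ha0 i j)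
            · rw [if_neg h2]
          · rw [dotp_combo v hvon, hgc j]
            have he : s i j * ((if j ∈ J i then (y i)⁻¹ * a i j else 0) * s i j)
                = (if j ∈ J i then (y i)⁻¹ * a i j else 0) := by
              linear_combination (if j ∈ J i then (y i)⁻¹ * a i j else 0) * hs2 i j
            rw [he]
            by_cases h2 : j ∈ J i
            · rw [if_pos h2]
            · rw [if_neg h2]
              exact mul_nonneg (inv_nonneg.2 h.le) (ha0 i j)
        · rw [if_neg h]; exact hD0 i
      refine ⟨dd, hddD, ?_⟩
      intro j
      have hsumc : dotp (v j) (∑ i, y i • (dd i + b i))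
          = (∑ i, (if 0 < y i ∧ j ∈ J i then a i j * s i j else 0))
            + ∑ l, y l * dotp (v j) (b l) := by
        rw [dotp_sum]
        have hterm : ∀ i, dotp (v j) (y i • (dd i + b i))
            = (if 0 < y i ∧ j ∈ J i then a i j * s i j else 0) + y i * dotp (v j) (b i) := by
          intro i
          rw [dotp_smul, dotp_add, hddcoord i j]
          by_cases h : 0 < y i ∧ j ∈ J i
          · rw [if_pos h, if_pos h]
            have hy0 : y i ≠ 0 := ne_of_gt h.1
            field_simp
          · rw [if_neg h, if_neg h]
            ring
        rw [Finset.sum_congr rfl fun i _ => hterm i, Finset.sum_add_distrib]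
      have huniq : ∀ i i', 0 < y i ∧ j ∈ J i → 0 < y i' ∧ j ∈ J i' → i = i' := by
        intro i i' hi hi'
        by_contra hne
        exact (Set.disjoint_left.1 (hJdisj i i' hne)) hi.2 hi'.2
      rw [dotp_sub, hsumc]
      have hgoal : dotp (v j) x - ((∑ i, (if 0 < y i ∧ j ∈ J i then a i j * s i j else 0))
            + ∑ l, y l * dotp (v j) (b l))
          = u j - ∑ i, (if 0 < y i ∧ j ∈ J i then a i j * s i j else 0) := by
        rw [hudef j]; ring
      rw [hgoal]
      by_cases hex : ∃ i0, 0 < y i0 ∧ j ∈ J i0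
      · obtain ⟨i0, hi0⟩ := hex
        have hsum1 : ∑ i, (if 0 < y i ∧ j ∈ J i then a i j * s i j else 0)
            = a i0 j * s i0 j := by
          rw [Finset.sum_eq_single i0]
          · rw [if_pos hi0]
          · intro l _ hl
            rw [if_neg]
            intro hc
            exact hl (huniq l i0 hc hi0)
          · simp
        rw [hsum1]
        by_cases hts : t j = s i0 j
        · have htu : 0 ≤ t j * u j := by
            by_contra hneg
            push_neg at hneg
            have hσ : (- t j) = -1 ∨ (- t j) = 1 := by
              rcases ht j with h | h <;> rw [h] <;> norm_num
            obtain ⟨l, hyl, hsl, hρl⟩ := hneed j (- t j) hσ (by linarith)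
            have hjl : j ∈ J l := hJmem l j hsl hρl
            have hlne : l ≠ i0 := by
              rintro rfl
              rw [hts] at hsl
              rcases hs l j with h | h <;> rw [h] at hsl <;> norm_num at hsl
            exact (Set.disjoint_left.1 (hJdisj l i0 hlne) hjl) hi0.2
          have hale : a i0 j ≤ t j * u j := by
            rw [hamax i0 j]
            refine max_le htu ?_
            have hSig : 0 ≤ ∑ l, (if l ≠ i0 ∧ s l j = s i0 j then ρ l j * y l else 0) :=
              Finset.sum_nonneg fun l _ => by
                by_cases hc : l ≠ i0 ∧ s l j = s i0 j
                · rw [if_pos hc]; exact mul_nonneg (hρ0 l j) (hyn l)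
                · rw [if_neg hc]
            rw [hts]
            linarith
          have heq2 : t j * (u j - a i0 j * s i0 j) = t j * u j - a i0 j := by
            rw [← hts]
            linear_combination (- (a i0 j)) * ht2 j
          rw [heq2]
          linarith
        · have hts' : t j = - s i0 j := by
            rcases hs i0 j with h | h <;> rcases ht j with h2 | h2 <;>
              rw [h, h2] at hts ⊢ <;> norm_num at hts <;> norm_num
          have hSig0 : ∑ l, (if l ≠ i0 ∧ s l j = s i0 j then ρ l j * y l else 0) = 0 := by
            apply Finset.sum_eq_zero
            intro l _
            by_cases hc : l ≠ i0 ∧ s l j = s i0 j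
            · rw [if_pos hc]
              by_contra hne0
              have hpos : 0 < ρ l j * y l :=
                lt_of_le_of_ne (mul_nonneg (hρ0 l j) (hyn l)) (Ne.symm hne0)
              have hρpos : 0 < ρ l j := by
                rcases eq_or_lt_of_le (hρ0 l j) with h0 | h0
                · rw [← h0] at hpos; linarith
                · exact h0
              have hjl : j ∈ J l := hJmem l j (by rw [hc.2, hts', neg_neg]) hρpos
              exact (Set.disjoint_left.1 (hJdisj l i0 hc.1) hjl) hi0.2
            · rw [if_neg hc]
          have hage : s i0 j * u j ≤ a i0 j := by
            rw [hamax i0 j, hSig0, sub_zero]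
            exact le_max_right _ _
          have heq2 : t j * (u j - a i0 j * s i0 j) = - (s i0 j * u j) + a i0 j := by
            rw [hts']
            linear_combination (a i0 j) * hs2 i0 j
          rw [heq2]
          linarith
      · push_neg at hex
        have hsum0 : ∑ i, (if 0 < y i ∧ j ∈ J i then a i j * s i j else 0) = 0 :=
          Finset.sum_eq_zero fun l _ => if_neg (fun hc => hex l hc.1 hc.2)
        rw [hsum0, sub_zero]
        by_contra hneg
        push_neg at hneg
        have hσ : (- t j) = -1 ∨ (- t j) = 1 := by
          rcases ht j with h | h <;> rw [h] <;> norm_num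
        obtain ⟨l, hyl, hsl, hρl⟩ := hneed j (- t j) hσ (by linarith)
        exact hex l hyl (hJmem l j hsl hρl)
    obtain ⟨SS, hSSdef⟩ : ∃ SS : Set (Fin n → ℝ),
        SS = (fun dd : Fin k → Fin n → ℝ => ∑ i, y i • (dd i + b i)) '' (Set.univ.pi D) :=
      ⟨_, rfl⟩
    have hFcont : Continuous (fun dd : Fin k → Fin n → ℝ => ∑ i, y i • (dd i + b i)) :=
      continuous_finset_sum _ fun i _ =>
        (((continuous_apply i).add continuous_const).const_smul (y i))
    have hScomp : IsCompact SS := by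
      rw [hSSdef]
      exact (isCompact_univ_pi fun i => (h1 i).2).image hFcont
    have hSconv : Convex ℝ SS := by
      rw [hSSdef]
      rintro p ⟨d1, hd1, rfl⟩ q ⟨d2, hd2, rfl⟩ α β hα hβ hαβ
      rw [Set.mem_univ_pi] at hd1 hd2
      refine ⟨fun i => α • d1 i + β • d2 i, ?_, ?_⟩
      · rw [Set.mem_univ_pi]
        intro i
        exact hDconv i (hd1 i) (hd2 i) hα hβ hαβ
      · rw [Finset.smul_sum, Finset.smul_sum, ← Finset.sum_add_distrib]
        refine Finset.sum_congr rfl fun i _ => ?_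
        have hb2 : b i = α • b i + β • b i := by rw [← add_smul, hαβ, one_smul]
        have hkey : (fun i => α • d1 i + β • d2 i) i + b i
            = α • (d1 i + b i) + β • (d2 i + b i) := by
          rw [smul_add, smul_add]
          conv_lhs => rw [hb2]
          ext j; simp only [Pi.add_apply, Pi.smul_apply, smul_eq_mul]; ring
        rw [hkey, smul_add, smul_comm (y i) α, smul_comm (y i) β]
    have hxS : x ∈ SS := by
      by_contra hxS
      obtain ⟨f, r, hfs, hfx⟩ :=
        geometric_hahn_banach_closed_point hSconv hScomp.isClosed hxS
      obtain ⟨t, htdef⟩ : ∃ t : Fin n → ℝ,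
          ∀ j, t j = if f (v j) ≤ 0 then 1 else -1 := ⟨_, fun j => rfl⟩
      have ht : ∀ j, t j = -1 ∨ t j = 1 := by
        intro j
        rw [htdef j]
        by_cases h : f (v j) ≤ 0 <;> simp [h]
      obtain ⟨dd, hddD, hddK⟩ := hstepB t ht
      have hκ : x - ∑ i, y i • (dd i + b i) ∈ Kcone v t :=
        (kcone_mem v hvon hvspan t ht _).2 hddK
      obtain ⟨lam, hlam, hlameq⟩ := hκ
      rw [sub_eq_iff_eq_add] at hlameq
      have hfx2 : f x = f (∑ i, y i • (dd i + b i)) + ∑ j, lam j * (t j * f (v j)) := by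
        rw [hlameq, map_add, add_comm]
        congr 1
        rw [map_sum]
        refine Finset.sum_congr rfl fun j _ => ?_
        rw [map_smul, map_smul]
        simp [smul_eq_mul, mul_assoc]
      have hterm : ∀ j, lam j * (t j * f (v j)) ≤ 0 := by
        intro j
        rw [htdef j]
        by_cases h : f (v j) ≤ 0
        · rw [if_pos h]
          nlinarith [hlam j]
        · rw [if_neg h]
          push_neg at h
          nlinarith [hlam j]
      have hmem : (∑ i, y i • (dd i + b i)) ∈ SS := by
        rw [hSSdef]
        exact ⟨dd, Set.mem_univ_pi.2 hddD, rfl⟩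
      have hlt := hfs _ hmem
      have hsum := Finset.sum_nonpos (fun j (_ : j ∈ Finset.univ) => hterm j)
      linarith
    rw [hSSdef] at hxS
    obtain ⟨dd, hddD, hddsum⟩ := hxS
    rw [Set.mem_univ_pi] at hddD
    exact ⟨fun i => dd i + b i, fun i => (hCmem i _).2 ⟨dd i, hddD i, rfl⟩, hddsum.symm⟩
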